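/- Let g(s) = s(1−s)² and let s₁ ∈ (0,1]. Then: (i) for every A ∈ (0,1], the infimum of g(As) over s ∈ [s₁, 1] equals min{ g(As₁), g(A) }; and (ii) the supremum over A ∈ (0,1) of (inf_{s ∈ [s₁,1]} g(As)) equals H(s₁), where H(t) = t(t + 1 + 2√t)/(t + 1 + √t)³; this supremum is attained at A₋ = 1/(s₁ + 1 + √s₁), i.e. H(s₁) = g(A₋) = inf_{s ∈ [s₁,1]} g(A₋ s). -/
import Mathlib


/-- `g(s) = s(1-s)²`. -/
noncomputable def g (s : ℝ) : ℝ := s * (1 - s) ^ 2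

/-- `H(t) = t(t+1+2√t)/(t+1+√t)³`. -/
noncomputable def H (t : ℝ) : ℝ :=
  t * (t + 1 + 2 * Real.sqrt t) / (t + 1 + Real.sqrt t) ^ 3

lemma g_mono {a b : ℝ} (ha : 0 ≤ a) (hab : a ≤ b) (hb : b ≤ 1/3) : g a ≤ g b := by
  unfold g
  nlinarith [mul_nonneg (sub_nonneg.2 hab) (mul_nonneg (sub_nonneg.2 (ha.trans hab))
    (sub_nonneg.2 hb)), sq_nonneg (a - b), sq_nonneg (a + b - 2/3),
    mul_nonneg ha (sub_nonneg.2 hab)]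

lemma g_anti {a b : ℝ} (ha : 1/3 ≤ a) (hab : a ≤ b) (hb : b ≤ 1) : g b ≤ g a := by
  unfold g
  nlinarith [mul_nonneg (sub_nonneg.2 hab) (mul_nonneg (sub_nonneg.2 (ha.trans hab))
    (sub_nonneg.2 hb)), sq_nonneg (a - b), sq_nonneg (a + b - 4/3),
    mul_nonneg (sub_nonneg.2 ha) (sub_nonneg.2 hab),
    mul_nonneg (sub_nonneg.2 hab) (sub_nonneg.2 hb)]

lemma g_lb {u v x : ℝ} (hu : 0 ≤ u) (hux : u ≤ x) (hxv : x ≤ v) (hv : v ≤ 1) :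
    min (g u) (g v) ≤ g x := by
  rcases le_total x (1/3) with h | h
  · exact le_trans (min_le_left _ _) (g_mono hu hux h)
  · exact le_trans (min_le_right _ _) (g_anti h hxv hv)

theorem sup_inf_g (s₁ : ℝ) (hs₁ : s₁ ∈ Set.Ioc (0 : ℝ) 1) :
    (∀ A ∈ Set.Ioc (0 : ℝ) 1,
      sInf ((fun s => g (A * s)) '' Set.Icc s₁ 1) = min (g (A * s₁)) (g A)) ∧
    sSup ((fun A => sInf ((fun s => g (A * s)) '' Set.Icc s₁ 1)) '' Set.Ioo (0 : ℝ) 1)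
      = H s₁ ∧
    (1 / (s₁ + 1 + Real.sqrt s₁)) ∈ Set.Ioo (0 : ℝ) 1 ∧
    H s₁ = g (1 / (s₁ + 1 + Real.sqrt s₁)) ∧
    H s₁ = sInf ((fun s => g ((1 / (s₁ + 1 + Real.sqrt s₁)) * s)) '' Set.Icc s₁ 1) := by
  obtain ⟨hs0, hs1⟩ := hs₁
  set t := Real.sqrt s₁ with htdef
  have ht0 : 0 < t := Real.sqrt_pos.2 hs0
  have ht2 : t ^ 2 = s₁ := Real.sq_sqrt hs0.le
  have ht1 : t ≤ 1 := by
    rw [htdef]; exact Real.sqrt_le_one.2 hs1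
  have hD0 : 0 < s₁ + 1 + t := by linarith
  have hD1 : 1 < s₁ + 1 + t := by linarith
  have hDne : s₁ + 1 + t ≠ 0 := hD0.ne'
  -- part (i)
  have part1 : ∀ A ∈ Set.Ioc (0 : ℝ) 1,
      sInf ((fun s => g (A * s)) '' Set.Icc s₁ 1) = min (g (A * s₁)) (g A) := by
    intro A ⟨hA0, hA1⟩
    have hmemA : g A ∈ (fun s => g (A * s)) '' Set.Icc s₁ 1 :=
      ⟨1, ⟨hs1, le_refl 1⟩, by simp⟩
    have hmemAs : g (A * s₁) ∈ (fun s => g (A * s)) '' Set.Icc s₁ 1 :=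
      ⟨s₁, ⟨le_refl s₁, hs1⟩, rfl⟩
    have hlb : ∀ y ∈ (fun s => g (A * s)) '' Set.Icc s₁ 1, min (g (A * s₁)) (g A) ≤ y := by
      rintro y ⟨s, ⟨hs₁s, hss⟩, rfl⟩
      refine g_lb (by positivity) ?_ ?_ hA1
      · exact mul_le_mul_of_nonneg_left hs₁s hA0.le
      · calc A * s ≤ A * 1 := mul_le_mul_of_nonneg_left hss hA0.le
          _ = A := mul_one A
    have hbdd : BddBelow ((fun s => g (A * s)) '' Set.Icc s₁ 1) :=
      ⟨min (g (A * s₁)) (g A), hlb⟩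
    refine le_antisymm (le_min (csInf_le hbdd hmemAs) (csInf_le hbdd hmemA))
      (le_csInf ⟨_, hmemA⟩ hlb)
  -- A₋ facts
  have hAmem : (1 / (s₁ + 1 + t)) ∈ Set.Ioo (0 : ℝ) 1 := by
    constructor
    · positivity
    · rw [div_lt_one hD0]; linarith
  have hHg : H s₁ = g (1 / (s₁ + 1 + t)) := by
    rw [H, g, ← htdef, show s₁ = t ^ 2 from ht2.symm]
    have h : t ^ 2 + 1 + t ≠ 0 := by positivity
    field_simp
    ring
  have hHgs : g ((1 / (s₁ + 1 + t)) * s₁) = g (1 / (s₁ + 1 + t)) := by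
    rw [g, g, show s₁ = t ^ 2 from ht2.symm]
    have h : t ^ 2 + 1 + t ≠ 0 := by positivity
    field_simp
    ring
  have hAthird : 1 / 3 ≤ 1 / (s₁ + 1 + t) := by
    rw [div_le_div_iff₀ (by norm_num) hD0]; linarith
  have hAsthird : (1 / (s₁ + 1 + t)) * s₁ ≤ 1 / 3 := by
    rw [one_div, inv_mul_eq_div, div_le_div_iff₀ hD0 (by norm_num)]
    nlinarith
  -- upper bound for min over A
  have hub : ∀ A ∈ Set.Ioo (0 : ℝ) 1, min (g (A * s₁)) (g A) ≤ H s₁ := by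
    rintro A ⟨hA0, hA1⟩
    rcases le_total A (1 / (s₁ + 1 + t)) with h | h
    · refine le_trans (min_le_left _ _) ?_
      rw [hHg, ← hHgs]
      exact g_mono (by positivity) (mul_le_mul_of_nonneg_right h hs0.le) hAsthird
    · refine le_trans (min_le_right _ _) ?_
      rw [hHg]
      exact g_anti hAthird h hA1.le
  -- sup
  have part2 : sSup ((fun A => sInf ((fun s => g (A * s)) '' Set.Icc s₁ 1))
      '' Set.Ioo (0 : ℝ) 1) = H s₁ := by
    have hubS : ∀ y ∈ (fun A => sInf ((fun s => g (A * s)) '' Set.Icc s₁ 1))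
        '' Set.Ioo (0 : ℝ) 1, y ≤ H s₁ := by
      rintro y ⟨A, hA, rfl⟩
      dsimp only
      rw [part1 A ⟨hA.1, hA.2.le⟩]
      exact hub A hA
    have hmem : H s₁ ∈ (fun A => sInf ((fun s => g (A * s)) '' Set.Icc s₁ 1))
        '' Set.Ioo (0 : ℝ) 1 := by
      refine ⟨1 / (s₁ + 1 + t), hAmem, ?_⟩
      dsimp only
      rw [part1 _ ⟨hAmem.1, hAmem.2.le⟩, hHgs, min_self, hHg]
    exact le_antisymm (csSup_le ⟨_, hmem⟩ hubS) (le_csSup ⟨H s₁, hubS⟩ hmem)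
  have part3 : H s₁ = sInf ((fun s => g ((1 / (s₁ + 1 + t)) * s)) '' Set.Icc s₁ 1) := by
    rw [part1 _ ⟨hAmem.1, hAmem.2.le⟩, hHgs, min_self, hHg]
  exact ⟨part1, part2, hAmem, hHg, part3⟩
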